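/- Let p ∈ (1/2, 1] and define g(y) = exp( ∫_2^{y+1} log( τ^p / (τ^p − 1) ) dτ ) and Λ̃(y) = ∫_2^{y+1} s^{−p} g(s) ds for y > 0 (y > 1 so the integrals are over nondegenerate intervals). Then lim_{y→∞} g(y)/Λ̃(y) = 1. -/

import Mathlib

open Filter MeasureTheory Topology Set intervalIntegral

namespace Stmt9

noncomputable def phi (p : ℝ) (τ : ℝ) : ℝ := Real.log (τ ^ p / (τ ^ p - 1))
noncomputable def G (p : ℝ) (x : ℝ) : ℝ := Real.exp (∫ τ in (2:ℝ)..x, phi p τ)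

variable {p : ℝ}

lemma one_lt_rpow (hp : 0 < p) {τ : ℝ} (hτ : 1 < τ) : 1 < τ ^ p :=
  (Real.one_lt_rpow_iff_of_pos (by linarith)).2 (Or.inl ⟨hτ, hp⟩)

lemma phi_eq (hp : 0 < p) {τ : ℝ} (hτ : 1 < τ) :
    phi p τ = -Real.log (1 - τ ^ (-p)) := by
  have h1 : (1:ℝ) < τ ^ p := one_lt_rpow hp hτ
  have h0 : (0:ℝ) < τ ^ p := by linarith
  have hne : τ ^ (-p) = (τ ^ p)⁻¹ := Real.rpow_neg (by linarith) p
  have : τ ^ p / (τ ^ p - 1) = ((τ ^ p - 1) / τ ^ p)⁻¹ := by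
    rw [inv_div]
  rw [phi, this, Real.log_inv, hne]
  rw [sub_div, div_self (ne_of_gt h0), one_div]

lemma phi_pos (hp : 0 < p) {τ : ℝ} (hτ : 1 < τ) : 0 < phi p τ := by
  have h1 : (1:ℝ) < τ ^ p := one_lt_rpow hp hτ
  have : 1 < τ ^ p / (τ ^ p - 1) := by
    rw [lt_div_iff₀ (by linarith)]; linarith
  exact Real.log_pos this

lemma continuousOn_phi (hp : 0 < p) : ContinuousOn (phi p) (Ioi 1) := by
  have h1 : ∀ τ ∈ Ioi (1:ℝ), (1:ℝ) < τ ^ p := fun τ hτ => one_lt_rpow hp hτ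
  have hc : ContinuousOn (fun τ : ℝ => τ ^ p) (Ioi 1) :=
    ContinuousOn.rpow_const continuousOn_id (fun τ hτ => Or.inl (by
      have : (1:ℝ) < τ := hτ; positivity))
  apply ContinuousOn.log
  · exact hc.div (hc.sub continuousOn_const) (fun τ hτ => by
      have := h1 τ hτ; intro h; linarith [h])
  · intro τ hτ
    have := h1 τ hτ
    have hd : (0:ℝ) < τ ^ p - 1 := by linarith
    positivity

lemma phi_anti (hp : 0 < p) : AntitoneOn (phi p) (Ioi 1) := by
  intro a ha b hb hab
  have ha1 : (1:ℝ) < a := ha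
  have hb1 : (1:ℝ) < b := hb
  have hap : (1:ℝ) < a ^ p := one_lt_rpow hp ha1
  have hbp : (1:ℝ) < b ^ p := one_lt_rpow hp hb1
  have hle : a ^ p ≤ b ^ p := Real.rpow_le_rpow (by linarith) hab (le_of_lt hp)
  have harg : 0 < b ^ p / (b ^ p - 1) := by
    apply div_pos (by linarith) (by linarith)
  apply Real.log_le_log harg
  rw [div_le_div_iff₀ (by linarith) (by linarith)]
  nlinarith

lemma phi_ge (hp0 : 1/2 < p) (hp1 : p ≤ 1) {τ : ℝ} (hτ : 2 ≤ τ) : τ⁻¹ ≤ phi p τ := by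
  have hp : 0 < p := by linarith
  have hτ1 : (1:ℝ) < τ := by linarith
  have hτp : (1:ℝ) < τ ^ p := one_lt_rpow hp hτ1
  have hinv : τ ^ (-p) = (τ ^ p)⁻¹ := Real.rpow_neg (by linarith) p
  have hu0 : 0 < τ ^ (-p) := by rw [hinv]; positivity
  have hu1 : τ ^ (-p) < 1 := by rw [hinv]; exact inv_lt_one_of_one_lt₀ hτp
  rw [phi_eq hp hτ1]
  have hlog : Real.log (1 - τ ^ (-p)) ≤ -τ ^ (-p) := by
    have := Real.log_le_sub_one_of_pos (x := 1 - τ ^ (-p)) (by linarith)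
    linarith
  have h2 : τ⁻¹ ≤ τ ^ (-p) := by
    rw [← Real.rpow_neg_one τ]
    exact Real.rpow_le_rpow_of_exponent_le (by linarith) (by linarith)
  linarith

lemma integrable_phi (hp : 0 < p) {a b : ℝ} (ha : 1 < a) (hb : 1 < b) :
    IntervalIntegrable (phi p) volume a b := by
  apply ContinuousOn.intervalIntegrable
  apply (continuousOn_phi hp).mono
  intro x hx
  rcases hx with ⟨h1, _⟩
  exact lt_of_lt_of_le (lt_min ha hb) h1


lemma hasDerivAt_G (hp : 0 < p) {x : ℝ} (hx : 1 < x) :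
    HasDerivAt (G p) (phi p x * G p x) x := by
  have hI : HasDerivAt (fun u => ∫ τ in (2:ℝ)..u, phi p τ) (phi p x) x := by
    apply intervalIntegral.integral_hasDerivAt_right (integrable_phi hp one_lt_two hx)
    · exact ContinuousOn.stronglyMeasurableAtFilter isOpen_Ioi (continuousOn_phi hp) x hx
    · exact (continuousOn_phi hp).continuousAt (Ioi_mem_nhds hx)
  have h2 := hI.exp
  rw [show G p = fun x => Real.exp (∫ τ in (2:ℝ)..x, phi p τ) from rfl]
  simpa [G, mul_comm] using h2

lemma G_pos (x : ℝ) : 0 < G p x := Real.exp_pos _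

lemma continuousOn_G (hp : 0 < p) : ContinuousOn (G p) (Ioi 1) :=
  fun x hx => ((hasDerivAt_G hp hx).continuousAt).continuousWithinAt

lemma integral_phiG (hp : 0 < p) {X : ℝ} (hX : 2 ≤ X) :
    ∫ s in (2:ℝ)..X, phi p s * G p s = G p X - G p 2 := by
  have hsub : uIcc (2:ℝ) X ⊆ Ioi 1 := by
    rw [uIcc_of_le hX]
    intro x hx
    exact lt_of_lt_of_le one_lt_two hx.1
  apply intervalIntegral.integral_eq_sub_of_hasDerivAt
  · intro x hx
    exact hasDerivAt_G hp (hsub hx)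
  · exact (((continuousOn_phi hp).mono hsub).mul
      ((continuousOn_G hp).mono hsub)).intervalIntegrable

lemma I_tendsto (hp0 : 1/2 < p) (hp1 : p ≤ 1) :
    Tendsto (fun x => ∫ τ in (2:ℝ)..x, phi p τ) atTop atTop := by
  have hp : 0 < p := by linarith
  have hlow : Tendsto (fun x : ℝ => Real.log x - Real.log 2) atTop atTop := by
    simp only [sub_eq_add_neg]
    exact tendsto_atTop_add_const_right _ _ Real.tendsto_log_atTop
  refine tendsto_atTop_mono' atTop ?_ hlow
  · filter_upwards [eventually_ge_atTop (2:ℝ)] with x hx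
    have hinv : ∫ τ in (2:ℝ)..x, τ⁻¹ = Real.log x - Real.log 2 := by
      rw [integral_inv (by
        rw [uIcc_of_le hx]
        intro h
        exact absurd h.1 (by norm_num)), Real.log_div (by linarith) (by norm_num)]
    rw [← hinv]
    apply intervalIntegral.integral_mono_on hx
    · apply ContinuousOn.intervalIntegrable
      apply ContinuousOn.inv₀ continuousOn_id
      intro τ hτ
      rw [uIcc_of_le hx] at hτ
      have := hτ.1; positivity
    · exact integrable_phi hp one_lt_two (by linarith)
    · intro τ hτ
      exact phi_ge hp0 hp1 hτ.1

lemma G_atTop (hp0 : 1/2 < p) (hp1 : p ≤ 1) : Tendsto (G p) atTop atTop :=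
  Real.tendsto_exp_atTop.comp (I_tendsto hp0 hp1)

lemma phi_tendsto_zero (hp : 0 < p) : Tendsto (phi p) atTop (𝓝 0) := by
  have h1 : Tendsto (fun s : ℝ => s ^ (-p)) atTop (𝓝 0) := tendsto_rpow_neg_atTop hp
  have h2 : ContinuousAt (fun u : ℝ => -Real.log (1 - u)) 0 := by
    apply ContinuousAt.neg
    exact (Real.continuousAt_log (by norm_num)).comp
      ((continuous_const.sub continuous_id).continuousAt)
  have h3 := (h2.tendsto.comp h1)
  simp only [Function.comp, sub_zero, Real.log_one, neg_zero] at h3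
  apply h3.congr'
  filter_upwards [eventually_gt_atTop (1:ℝ)] with s hs
  exact (phi_eq hp hs).symm

lemma ratio_G (hp0 : 1/2 < p) (hp1 : p ≤ 1) :
    Tendsto (fun s => G p (s + 1) / G p s) atTop (𝓝 1) := by
  have hp : 0 < p := by linarith
  have key : ∀ s : ℝ, 2 ≤ s →
      G p (s + 1) / G p s = Real.exp (∫ τ in s..(s+1), phi p τ) := by
    intro s hs
    have hi1 : IntervalIntegrable (phi p) volume 2 s :=
      integrable_phi hp one_lt_two (by linarith)
    have hi2 : IntervalIntegrable (phi p) volume s (s+1) :=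
      integrable_phi hp (by linarith) (by linarith)
    rw [G, G, ← Real.exp_sub]
    congr 1
    rw [← intervalIntegral.integral_add_adjacent_intervals hi1 hi2]
    ring
  have hJ : Tendsto (fun s => ∫ τ in s..(s+1), phi p τ) atTop (𝓝 0) := by
    apply tendsto_of_tendsto_of_tendsto_of_le_of_le' tendsto_const_nhds
      (phi_tendsto_zero hp)
    · filter_upwards [eventually_ge_atTop (2:ℝ)] with s hs
      apply intervalIntegral.integral_nonneg (by linarith)
      intro τ hτ
      exact le_of_lt (phi_pos hp (by linarith [hτ.1]))
    · filter_upwards [eventually_ge_atTop (2:ℝ)] with s hs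
      have : ∫ τ in s..(s+1), phi p τ ≤ ∫ τ in s..(s+1), phi p s := by
        apply intervalIntegral.integral_mono_on (by linarith)
          (integrable_phi hp (by linarith) (by linarith))
          intervalIntegrable_const
        intro τ hτ
        exact phi_anti hp (by simp; linarith) (by simp; linarith [hτ.1]) hτ.1
      simpa using this
  have := (Real.continuous_exp.continuousAt.tendsto.comp hJ)
  simp only [Function.comp, Real.exp_zero] at this
  apply this.congr'
  filter_upwards [eventually_ge_atTop (2:ℝ)] with s hs
  exact (key s hs).symm

lemma ratio_rpow_phi (hp0 : 1/2 < p) (hp1 : p ≤ 1) :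
    Tendsto (fun s : ℝ => s ^ (-p) / phi p s) atTop (𝓝 1) := by
  have hp : 0 < p := by linarith
  have hF : HasDerivAt (fun u : ℝ => -Real.log (1 - u)) 1 0 := by
    have h1 : HasDerivAt (fun u : ℝ => 1 - u) (-1) 0 := (hasDerivAt_id 0).const_sub 1
    have h2 : HasDerivAt Real.log 1 ((fun u : ℝ => 1 - u) 0) := by
      simpa using Real.hasDerivAt_log (by norm_num : (1:ℝ) - 0 ≠ 0)
    have := (h2.comp 0 h1).neg
    exact this.congr_deriv (by norm_num)
  have hslope := hasDerivAt_iff_tendsto_slope.1 hF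
  have hcomp : Tendsto (fun s : ℝ => s ^ (-p)) atTop (𝓝[≠] 0) := by
    apply tendsto_nhdsWithin_of_tendsto_nhds_of_eventually_within _
      (tendsto_rpow_neg_atTop hp)
    filter_upwards [eventually_gt_atTop (0:ℝ)] with s hs
    exact ne_of_gt (Real.rpow_pos_of_pos hs _)
  have h3 := hslope.comp hcomp
  have h4 : Tendsto (fun s : ℝ => phi p s / s ^ (-p)) atTop (𝓝 1) := by
    apply h3.congr'
    filter_upwards [eventually_gt_atTop (1:ℝ)] with s hs
    simp only [Function.comp, slope_def_field]
    rw [phi_eq hp hs]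
    simp
  have h5 := h4.inv₀ one_ne_zero
  simp only [inv_one] at h5
  apply h5.congr
  intro s
  rw [inv_div]


lemma cesaro (f h : ℝ → ℝ) (a : ℝ)
    (hfi : ∀ x, a ≤ x → IntervalIntegrable f volume a x)
    (hhi : ∀ x, a ≤ x → IntervalIntegrable h volume a x)
    (hnn : ∀ x, a ≤ x → 0 ≤ h x)
    (hdiv : Tendsto (fun x => ∫ t in a..x, h t) atTop atTop)
    (hratio : Tendsto (fun s => f s / h s) atTop (𝓝 1)) :
    Tendsto (fun x => (∫ t in a..x, f t) / (∫ t in a..x, h t)) atTop (𝓝 1) := by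
  set Fi : ℝ → ℝ := fun x => ∫ t in a..x, f t with hFi
  set H : ℝ → ℝ := fun x => ∫ t in a..x, h t with hH
  rw [Metric.tendsto_nhds]
  intro ε hε
  set δ : ℝ := min (ε/4) (1/2) with hδdef
  have hδ : 0 < δ := lt_min (by linarith) (by norm_num)
  have hδ2 : δ ≤ 1/2 := min_le_right _ _
  have hδε : δ ≤ ε/4 := min_le_left _ _
  have hev : ∀ᶠ s in atTop, |f s / h s - 1| < δ := by
    have := Metric.tendsto_nhds.1 hratio δ hδ
    simpa [Real.dist_eq] using this
  obtain ⟨X0, hX0⟩ := eventually_atTop.1 (hev.and (eventually_ge_atTop a))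
  set X : ℝ := max X0 a with hXdef
  have hXa : a ≤ X := le_max_right _ _
  have hkey : ∀ s, X ≤ s → 0 < h s ∧ |f s - h s| ≤ δ * h s := by
    intro s hs
    obtain ⟨h1, h2⟩ := hX0 s (le_trans (le_max_left _ _) hs)
    have hhs : 0 ≤ h s := hnn s (le_trans hXa hs)
    have hne : h s ≠ 0 := by
      intro h0
      rw [h0] at h1
      simp at h1
      linarith
    have hpos : 0 < h s := lt_of_le_of_ne hhs (Ne.symm hne)
    refine ⟨hpos, ?_⟩
    have : f s / h s - 1 = (f s - h s) / h s := by
      field_simp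
    rw [this, abs_div, abs_of_pos hpos, div_lt_iff₀ hpos] at h1
    linarith
  set C : ℝ := |Fi X - H X| with hCdef
  have hC0 : 0 ≤ C := abs_nonneg _
  have hHX : 0 ≤ H X := by
    apply intervalIntegral.integral_nonneg hXa
    intro t ht
    exact hnn t ht.1
  have hbound : ∀ x, X ≤ x → |Fi x - H x| ≤ C + δ * H x := by
    intro x hx
    have hax : a ≤ x := le_trans hXa hx
    have hsub : uIcc X x ⊆ uIcc a x := by
      rw [uIcc_of_le hax, uIcc_of_le hx]
      exact Icc_subset_Icc hXa le_rfl
    have hfX : IntervalIntegrable f volume a X := hfi X hXa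
    have hhXi : IntervalIntegrable h volume a X := hhi X hXa
    have hfXx : IntervalIntegrable f volume X x := (hfi x hax).mono_set hsub
    have hhXx : IntervalIntegrable h volume X x := (hhi x hax).mono_set hsub
    have hFieq : Fi x = Fi X + ∫ t in X..x, f t :=
      (intervalIntegral.integral_add_adjacent_intervals hfX hfXx).symm
    have hHeq : H x = H X + ∫ t in X..x, h t :=
      (intervalIntegral.integral_add_adjacent_intervals hhXi hhXx).symm
    have habs : |∫ t in X..x, (f t - h t)| ≤ δ * ∫ t in X..x, h t := by
      calc |∫ t in X..x, (f t - h t)| ≤ ∫ t in X..x, |f t - h t| :=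
            intervalIntegral.abs_integral_le_integral_abs hx
        _ ≤ ∫ t in X..x, δ * h t := by
            apply intervalIntegral.integral_mono_on hx (hfXx.sub hhXx).abs
              (hhXx.const_mul δ)
            intro t ht
            exact (hkey t ht.1).2
        _ = δ * ∫ t in X..x, h t := intervalIntegral.integral_const_mul δ h
    have hint : ∫ t in X..x, (f t - h t) = (∫ t in X..x, f t) - ∫ t in X..x, h t :=
      intervalIntegral.integral_sub hfXx hhXx
    have hHx : (0:ℝ) ≤ ∫ t in X..x, h t := by
      apply intervalIntegral.integral_nonneg hx
      intro t ht
      exact le_of_lt (hkey t ht.1).1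
    have h1 : Fi x - H x = (Fi X - H X) + ((∫ t in X..x, f t) - ∫ t in X..x, h t) := by
      rw [hFieq, hHeq]; ring
    rw [h1]
    calc |(Fi X - H X) + ((∫ t in X..x, f t) - ∫ t in X..x, h t)|
        ≤ |Fi X - H X| + |(∫ t in X..x, f t) - ∫ t in X..x, h t| := abs_add_le _ _
      _ ≤ C + δ * ∫ t in X..x, h t := by
          rw [← hint]
          exact add_le_add le_rfl habs
      _ ≤ C + δ * H x := by
          rw [hHeq]
          nlinarith
  filter_upwards [eventually_ge_atTop X, hdiv.eventually_gt_atTop (2*(C+1)/ε)]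
    with x hx hHbig
  have hHpos : 0 < H x := lt_trans (by positivity) hHbig
  rw [Real.dist_eq]
  have heq : Fi x / H x - 1 = (Fi x - H x) / H x := by field_simp
  rw [heq, abs_div, abs_of_pos hHpos]
  have hCH : C / H x < ε / 2 := by
    rw [div_lt_iff₀ hHpos]
    rw [div_lt_iff₀ hε] at hHbig
    nlinarith
  calc |Fi x - H x| / H x ≤ (C + δ * H x) / H x := by
        gcongr
        exact hbound x hx
    _ = C / H x + δ := by field_simp
    _ < ε / 2 + ε / 4 := by
        apply add_lt_add_of_lt_of_le hCH hδε
    _ < ε := by linarith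

end Stmt9

theorem stmt_9 (p : ℝ) (hp0 : 1 / 2 < p) (hp1 : p ≤ 1)
    (g : ℝ → ℝ)
    (hg : ∀ y : ℝ, g y = Real.exp (∫ τ in (2 : ℝ)..(y + 1), Real.log (τ ^ p / (τ ^ p - 1))))
    (Λt : ℝ → ℝ)
    (hΛt : ∀ y : ℝ, Λt y = ∫ s in (2 : ℝ)..(y + 1), s ^ (-p) * g s) :
    Tendsto (fun y => g y / Λt y) atTop (𝓝 1) := by
  have hp : 0 < p := by linarith
  have hgG : ∀ y, g y = Stmt9.G p (y + 1) := fun y => by rw [hg]; rfl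
  set c : ℝ := Stmt9.G p 2 with hc
  set f : ℝ → ℝ := fun s => s ^ (-p) * Stmt9.G p (s + 1) with hf
  set h : ℝ → ℝ := fun s => Stmt9.phi p s * Stmt9.G p s with hhdef
  have hΛf : ∀ y, Λt y = ∫ s in (2:ℝ)..(y+1), f s := by
    intro y; rw [hΛt]; simp only [hgG, hf]
  have hgtop : Tendsto g atTop atTop := by
    have h1 := (Stmt9.G_atTop hp0 hp1).comp
      (tendsto_atTop_add_const_right atTop 1 tendsto_id)
    apply h1.congr
    intro y
    exact (hgG y).symm
  have hIci : Ici (2:ℝ) ⊆ Ioi 1 := fun x hx => show (1:ℝ) < x from lt_of_lt_of_le one_lt_two hx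
  have hIci1 : ∀ s ∈ Ici (2:ℝ), s + 1 ∈ Ioi (1:ℝ) := fun s hs => by
    have : (2:ℝ) ≤ s := hs
    simp only [mem_Ioi]; linarith
  have hconth : ContinuousOn h (Ici 2) :=
    ((Stmt9.continuousOn_phi hp).mono hIci).mul ((Stmt9.continuousOn_G hp).mono hIci)
  have hcontf : ContinuousOn f (Ici 2) := by
    apply ContinuousOn.mul
    · exact ContinuousOn.rpow_const continuousOn_id (fun s hs => Or.inl (by
        have : (2:ℝ) ≤ s := hs; positivity))
    · exact (Stmt9.continuousOn_G hp).comp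
        ((continuous_id.add continuous_const).continuousOn) hIci1
  have hsubi : ∀ x : ℝ, 2 ≤ x → uIcc (2:ℝ) x ⊆ Ici 2 := by
    intro x hx
    rw [uIcc_of_le hx]
    exact Icc_subset_Ici_self
  have hfi : ∀ x, (2:ℝ) ≤ x → IntervalIntegrable f volume 2 x := fun x hx =>
    (hcontf.mono (hsubi x hx)).intervalIntegrable
  have hhi : ∀ x, (2:ℝ) ≤ x → IntervalIntegrable h volume 2 x := fun x hx =>
    (hconth.mono (hsubi x hx)).intervalIntegrable
  have hnn : ∀ x, (2:ℝ) ≤ x → 0 ≤ h x := fun x hx =>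
    le_of_lt (mul_pos (Stmt9.phi_pos hp (by linarith)) (Stmt9.G_pos x))
  have hdiv : Tendsto (fun x => ∫ t in (2:ℝ)..x, h t) atTop atTop := by
    have h1 := tendsto_atTop_add_const_right atTop (-c) (Stmt9.G_atTop hp0 hp1)
    apply h1.congr'
    filter_upwards [eventually_ge_atTop (2:ℝ)] with x hx
    rw [Stmt9.integral_phiG hp hx]
    ring
  have hratio : Tendsto (fun s => f s / h s) atTop (𝓝 1) := by
    have h1 := (Stmt9.ratio_rpow_phi hp0 hp1).mul (Stmt9.ratio_G hp0 hp1)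
    rw [one_mul] at h1
    apply h1.congr
    intro s
    rw [div_mul_div_comm]
  have RT := Stmt9.cesaro f h 2 hfi hhi hnn hdiv hratio
  have RT1 := RT.comp (tendsto_atTop_add_const_right atTop 1 tendsto_id)
  have hB := RT1.inv₀ one_ne_zero
  rw [inv_one] at hB
  have hA : Tendsto (fun y => g y / (g y - c)) atTop (𝓝 1) := by
    have h0 : Tendsto (fun y => c / g y) atTop (𝓝 0) :=
      tendsto_const_nhds.div_atTop hgtop
    have h1 : Tendsto (fun y => 1 - c / g y) atTop (𝓝 1) := by
      have := tendsto_const_nhds (x := (1:ℝ)) (f := atTop (α := ℝ)) |>.sub h0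
      simpa using this
    have h2 := h1.inv₀ one_ne_zero
    rw [inv_one] at h2
    apply h2.congr'
    filter_upwards [hgtop.eventually_gt_atTop 0] with y hy
    rw [show (1 : ℝ) - c / g y = (g y - c) / g y by field_simp, inv_div]
  have final := hA.mul hB
  rw [one_mul] at final
  apply final.congr'
  filter_upwards [hgtop.eventually_gt_atTop (max c 0 + 1), eventually_ge_atTop (1:ℝ)]
    with y hy hy1
  have hy2 : (2:ℝ) ≤ y + 1 := by linarith
  have hgc : 0 < g y - c := by
    have := le_max_left c 0
    linarith
  have hH : (∫ t in (2:ℝ)..(y+1), h t) = g y - c := by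
    rw [Stmt9.integral_phiG hp hy2, hgG y]
  show g y / (g y - c) *
      ((∫ t in (2:ℝ)..(y+1), f t) / ∫ t in (2:ℝ)..(y+1), h t)⁻¹ = g y / Λt y
  rw [inv_div, hH, ← hΛf y]
  rw [div_mul_div_comm, mul_comm (g y) (g y - c), mul_div_mul_left _ _ (ne_of_gt hgc)]
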